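/- (Meshulam's theorem) Let p be an odd prime. There exists a constant c_p > 0, depending only on p, such that for every n ≥ 1 and every set S ⊆ 𝔽_p^n with |S| ≥ c_p·p^n/n, the set S contains a nontrivial three-term arithmetic progression; that is, there exist m, d ∈ 𝔽_p^n with d ≠ 0 and m, m+d, m+2d ∈ S. -/

import Mathlib

open scoped Classical
open Finset

namespace Meshulam

variable {p : ℕ}

def dotp {p n : ℕ} (γ x : Fin n → ZMod p) : ZMod p := ∑ i, γ i * x i

noncomputable def fc {p n : ℕ} (ψ : AddChar (ZMod p) ℂ) (A : Finset (Fin n → ZMod p))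
    (γ : Fin n → ZMod p) : ℂ := ∑ x ∈ A, ψ (dotp γ x)

def Free {p n : ℕ} (A : Finset (Fin n → ZMod p)) : Prop :=
  ∀ m d : Fin n → ZMod p, d ≠ 0 → m ∈ A → m + d ∈ A → m + 2 • d ∈ A → False

lemma psi_sum {M : Type*} [CommMonoid M] {A : Type*} [AddCommMonoid A] (ψ : AddChar A M)
    {ι : Type*} (s : Finset ι) (f : ι → A) : ψ (∑ i ∈ s, f i) = ∏ i ∈ s, ψ (f i) := by
  classical
  induction s using Finset.induction with
  | empty => simp
  | @insert a s h ih => rw [Finset.sum_insert h, Finset.prod_insert h, AddChar.map_add_eq_mul, ih]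

lemma dotp_zero_left {n : ℕ} (x : Fin n → ZMod p) : dotp (0 : Fin n → ZMod p) x = 0 := by
  simp [dotp]

lemma dotp_sub_right {n : ℕ} (γ x y : Fin n → ZMod p) :
    dotp γ (x - y) = dotp γ x - dotp γ y := by
  simp [dotp, mul_sub, Finset.sum_sub_distrib]

lemma dotp_key {n : ℕ} (γ x y z : Fin n → ZMod p) :
    dotp γ x + dotp γ y + dotp (-(2 • γ)) z = dotp γ (x + y - 2 • z) := by
  simp only [dotp, ← Finset.sum_add_distrib, ← Finset.sum_sub_distrib]
  refine Finset.sum_congr rfl fun i _ => ?_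
  simp only [two_smul, Pi.neg_apply, Pi.add_apply, Pi.sub_apply]
  ring

section Char

variable [NeZero p]

lemma sum_psi_dotp {n : ℕ} {ψ : AddChar (ZMod p) ℂ} (hψ : ψ.IsPrimitive)
    (w : Fin n → ZMod p) :
    ∑ γ : Fin n → ZMod p, ψ (dotp γ w) = if w = 0 then ((p : ℂ)) ^ n else 0 := by
  have h1 : ∀ γ : Fin n → ZMod p, ψ (dotp γ w) = ∏ i, ψ (γ i * w i) :=
    fun γ => psi_sum ψ _ _
  simp_rw [h1]
  rw [← Fintype.piFinset_univ]
  rw [Finset.sum_prod_piFinset univ fun i j => ψ (j * w i)]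
  have h2 : ∀ i, ∑ j : ZMod p, ψ (j * w i) = if w i = 0 then ((p : ℂ)) else 0 := by
    intro i
    rw [AddChar.sum_mulShift _ hψ]
    simp [ZMod.card]
  simp_rw [h2]
  by_cases hw : w = 0
  · simp [hw, Finset.prod_const]
  · rw [if_neg hw]
    obtain ⟨i, hi⟩ : ∃ i, w i ≠ 0 := by
      by_contra hc
      push_neg at hc
      exact hw (funext hc)
    exact Finset.prod_eq_zero (Finset.mem_univ i) (by rw [if_neg hi])

lemma abs_psi {n : ℕ} [NeZero n] (ψ : AddChar (ZMod n) ℂ) (a : ZMod n) :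
    ‖ψ a‖ = 1 := by
  have h : ψ a ^ n = 1 := by
    rw [← AddChar.map_nsmul_eq_pow]
    have : n • a = 0 := by
      rw [nsmul_eq_mul, ZMod.natCast_self, zero_mul]
    rw [this, AddChar.map_zero_eq_one]
  have := Complex.norm_eq_one_of_pow_eq_one h (NeZero.ne n)
  exact this

lemma conj_psi {ψ : AddChar (ZMod p) ℂ} (a : ZMod p) :
    (starRingEnd ℂ) (ψ a) = ψ (-a) := by
  have h1 : ψ a * ψ (-a) = 1 := by
    rw [← AddChar.map_add_eq_mul, add_neg_cancel, AddChar.map_zero_eq_one]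
  have h2 : ‖ψ a‖ = 1 := abs_psi ψ a
  have h3 : (ψ a)⁻¹ = ψ (-a) := eq_comm.mp (eq_inv_of_mul_eq_one_right h1)
  rw [← h3, ← Complex.inv_eq_conj h2]

lemma parseval {n : ℕ} {ψ : AddChar (ZMod p) ℂ} (hψ : ψ.IsPrimitive)
    (A : Finset (Fin n → ZMod p)) :
    ∑ γ : Fin n → ZMod p, ‖fc ψ A γ‖ ^ 2 = (p : ℝ) ^ n * A.card := by
  have key : ∑ γ : Fin n → ZMod p, fc ψ A γ * (starRingEnd ℂ) (fc ψ A γ)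
      = (p : ℂ) ^ n * A.card := by
    have h1 : ∀ γ : Fin n → ZMod p, fc ψ A γ * (starRingEnd ℂ) (fc ψ A γ)
        = ∑ x ∈ A, ∑ y ∈ A, ψ (dotp γ (x - y)) := by
      intro γ
      rw [fc, map_sum, Finset.sum_mul_sum]
      refine Finset.sum_congr rfl fun x _ => Finset.sum_congr rfl fun y _ => ?_
      rw [conj_psi, ← AddChar.map_add_eq_mul, dotp_sub_right, sub_eq_add_neg]
    simp_rw [h1]
    rw [Finset.sum_comm]
    have h2 : ∀ x ∈ A, ∑ γ : Fin n → ZMod p, ∑ y ∈ A, ψ (dotp γ (x - y))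
        = (p : ℂ) ^ n := by
      intro x hx
      rw [Finset.sum_comm]
      have h3 : ∀ y ∈ A, ∑ γ : Fin n → ZMod p, ψ (dotp γ (x - y))
          = if x - y = 0 then ((p : ℂ)) ^ n else 0 := fun y _ => sum_psi_dotp hψ _
      rw [Finset.sum_congr rfl h3]
      have h4 : ∀ y ∈ A, (if x - y = 0 then ((p:ℂ))^n else 0)
          = if y = x then ((p:ℂ))^n else 0 := by
        intro y _
        congr 1
        simp [sub_eq_zero, eq_comm]
      rw [Finset.sum_congr rfl h4, Finset.sum_ite_eq' A x (fun _ => ((p:ℂ))^n), if_pos hx]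
    rw [Finset.sum_congr rfl h2, Finset.sum_const, nsmul_eq_mul, mul_comm]
  have h6 : ((∑ γ : Fin n → ZMod p, ‖fc ψ A γ‖ ^ 2 : ℝ) : ℂ)
      = (((p : ℝ) ^ n * A.card : ℝ) : ℂ) := by
    push_cast
    rw [← key]
    refine Finset.sum_congr rfl fun γ _ => ?_
    rw [Complex.mul_conj, ← Complex.sq_norm]
    norm_cast
  exact_mod_cast h6

variable [hpp : Fact p.Prime]

lemma neg_two_smul_ne_zero {n : ℕ} (hp2 : (2 : ZMod p) ≠ 0) {γ : Fin n → ZMod p} (hγ : γ ≠ 0) :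
    -(2 • γ) ≠ (0 : Fin n → ZMod p) := by
  intro h
  apply hγ
  funext i
  have h1 := congrFun h i
  simp only [Pi.neg_apply, Pi.smul_apply, Pi.zero_apply, neg_eq_zero, nsmul_eq_mul,
    Nat.cast_ofNat] at h1
  rcases mul_eq_zero.mp h1 with h2 | h2
  · exact absurd h2 hp2
  · exact h2

lemma triple_iff {n : ℕ} {A : Finset (Fin n → ZMod p)} (hA : Free A)
    {x y z : Fin n → ZMod p} (hx : x ∈ A) (hy : y ∈ A) (hz : z ∈ A) :
    x + y - 2 • z = 0 ↔ (y = x ∧ z = x) := by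
  constructor
  · intro h
    have hxy : x + y = 2 • z := by rwa [sub_eq_zero] at h
    by_cases hd : z - x = 0
    · have hzx : z = x := by rwa [sub_eq_zero] at hd
      refine ⟨?_, hzx⟩
      have h5 : x + y = x + x := by rw [hxy, hzx, two_smul]
      exact add_left_cancel h5
    · have hy2 : y = 2 • z - x := by rw [← hxy]; abel
      have hz' : x + (z - x) ∈ A := by
        rwa [show x + (z - x) = z from by abel]
      have hy' : x + 2 • (z - x) ∈ A := by
        rwa [show x + 2 • (z - x) = y from by rw [hy2, two_smul, two_smul]; abel]
      exact (hA x (z - x) hd hx hz' hy').elim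
  · rintro ⟨h1, h2⟩
    rw [h1, h2, two_smul]
    abel

lemma count_eq {n : ℕ} {ψ : AddChar (ZMod p) ℂ} (hψ : ψ.IsPrimitive)
    {A : Finset (Fin n → ZMod p)} (hA : Free A) :
    ∑ γ : Fin n → ZMod p, fc ψ A γ * fc ψ A γ * fc ψ A (-(2 • γ))
      = (p : ℂ) ^ n * A.card := by
  have h1 : ∀ γ : Fin n → ZMod p, fc ψ A γ * fc ψ A γ * fc ψ A (-(2 • γ))
      = ∑ x ∈ A, ∑ y ∈ A, ∑ z ∈ A, ψ (dotp γ (x + y - 2 • z)) := by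
    intro γ
    simp only [fc]
    rw [Finset.sum_mul_sum, Finset.sum_mul]
    refine Finset.sum_congr rfl fun x _ => ?_
    rw [Finset.sum_mul]
    refine Finset.sum_congr rfl fun y _ => ?_
    rw [Finset.mul_sum]
    refine Finset.sum_congr rfl fun z _ => ?_
    rw [← AddChar.map_add_eq_mul, ← AddChar.map_add_eq_mul, dotp_key]
  simp_rw [h1]
  rw [Finset.sum_comm]
  have h2 : ∀ x ∈ A, (∑ γ : Fin n → ZMod p, ∑ y ∈ A, ∑ z ∈ A,
      ψ (dotp γ (x + y - 2 • z))) = (p : ℂ) ^ n := by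
    intro x hx
    rw [Finset.sum_comm]
    have h3 : ∀ y ∈ A, (∑ γ : Fin n → ZMod p, ∑ z ∈ A, ψ (dotp γ (x + y - 2 • z)))
        = ∑ z ∈ A, ∑ γ : Fin n → ZMod p, ψ (dotp γ (x + y - 2 • z)) :=
      fun y _ => Finset.sum_comm
    rw [Finset.sum_congr rfl h3]
    have h4 : ∀ y ∈ A, (∑ z ∈ A, ∑ γ : Fin n → ZMod p, ψ (dotp γ (x + y - 2 • z)))
        = ∑ z ∈ A, if (y = x ∧ z = x) then ((p:ℂ)) ^ n else 0 := by
      intro y hy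
      refine Finset.sum_congr rfl fun z hz => ?_
      rw [sum_psi_dotp hψ]
      congr 1
      · exact propext (triple_iff hA hx hy hz)
    rw [Finset.sum_congr rfl h4]
    have h5 : ∀ y ∈ A, (∑ z ∈ A, if (y = x ∧ z = x) then ((p:ℂ)) ^ n else 0)
        = if y = x then ((p:ℂ)) ^ n else 0 := by
      intro y _
      by_cases hyx : y = x
      · subst hyx
        simp [hx]
      · simp [hyx]
    rw [Finset.sum_congr rfl h5, Finset.sum_ite_eq' A x fun _ => ((p:ℂ)) ^ n, if_pos hx]
  rw [Finset.sum_congr rfl h2, Finset.sum_const, nsmul_eq_mul, mul_comm]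

lemma exists_large {n : ℕ} {ψ : AddChar (ZMod p) ℂ} (hψ : ψ.IsPrimitive)
    (hp2 : (2 : ZMod p) ≠ 0) {A : Finset (Fin n → ZMod p)} (hA : Free A)
    (h2 : 2 * (p : ℝ) ^ n < (A.card : ℝ) ^ 2) :
    ∃ γ : Fin n → ZMod p, γ ≠ 0 ∧
      (A.card : ℝ) ^ 2 / (2 * (p : ℝ) ^ n) ≤ ‖fc ψ A γ‖ := by
  by_contra hcon
  push_neg at hcon
  set N : ℝ := (p : ℝ) ^ n with hN
  set r : ℝ := (A.card : ℝ) with hr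
  have hppos : (0:ℝ) < p := by exact_mod_cast hpp.out.pos
  have hNpos : 0 < N := pow_pos hppos n
  have hrpos : 0 < r := by nlinarith [sq_nonneg r]
  set δ : ℝ := r ^ 2 / (2 * N) with hδ
  have hδpos : 0 < δ := by positivity
  have h0 : fc ψ A (0 : Fin n → ZMod p) = (A.card : ℂ) := by
    simp [fc, dotp_zero_left]
  have key := count_eq hψ hA
  rw [← Finset.add_sum_erase _ _ (Finset.mem_univ (0 : Fin n → ZMod p))] at key
  have hterm0 : fc ψ A 0 * fc ψ A 0 * fc ψ A (-(2 • (0 : Fin n → ZMod p)))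
      = (A.card : ℂ) ^ 3 := by
    rw [show -((2:ℕ) • (0 : Fin n → ZMod p)) = (0 : Fin n → ZMod p) by simp, h0]; ring
  rw [hterm0] at key
  have hErest : ‖(p:ℂ) ^ n * A.card - (A.card : ℂ) ^ 3‖ ≤ δ * (N * r) := by
    have hEq : ∑ γ ∈ Finset.univ.erase (0 : Fin n → ZMod p),
        fc ψ A γ * fc ψ A γ * fc ψ A (-(2 • γ)) = (p:ℂ) ^ n * A.card - (A.card : ℂ) ^ 3 := by
      rw [← key]; ring
    rw [← hEq]
    calc ‖∑ γ ∈ Finset.univ.erase (0 : Fin n → ZMod p),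
          fc ψ A γ * fc ψ A γ * fc ψ A (-(2 • γ))‖
        ≤ ∑ γ ∈ Finset.univ.erase (0 : Fin n → ZMod p),
          ‖fc ψ A γ * fc ψ A γ * fc ψ A (-(2 • γ))‖ :=
        norm_sum_le _ _
      _ ≤ ∑ γ ∈ Finset.univ.erase (0 : Fin n → ZMod p),
          ‖fc ψ A γ‖ ^ 2 * δ := by
        refine Finset.sum_le_sum fun γ hγ => ?_
        rw [norm_mul, norm_mul]
        have hγ0 : γ ≠ 0 := (Finset.mem_erase.mp hγ).1
        have h5 := le_of_lt (hcon _ (neg_two_smul_ne_zero hp2 hγ0))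
        have h6 := norm_nonneg (fc ψ A γ)
        nlinarith [norm_nonneg (fc ψ A (-(2 • γ)))]
      _ = δ * ∑ γ ∈ Finset.univ.erase (0 : Fin n → ZMod p),
          ‖fc ψ A γ‖ ^ 2 := by
        rw [← Finset.sum_mul, mul_comm]
      _ ≤ δ * (N * r) := by
        have hpar := parseval hψ A
        have hsub : ∑ γ ∈ Finset.univ.erase (0 : Fin n → ZMod p),
            ‖fc ψ A γ‖ ^ 2 ≤ N * r := by
          rw [hN, hr, ← hpar]
          exact Finset.sum_le_sum_of_subset_of_nonneg (Finset.erase_subset _ _)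
            (fun γ _ _ => sq_nonneg _)
        exact mul_le_mul_of_nonneg_left hsub (le_of_lt hδpos)
  have hcast : (((N * r - r ^ 3 : ℝ)) : ℂ) = (p:ℂ) ^ n * (A.card : ℂ) - (A.card : ℂ) ^ 3 := by
    simp only [hN, hr]
    push_cast
    ring
  have h7 : r ^ 3 - N * r ≤ δ * (N * r) := by
    calc r ^ 3 - N * r ≤ |N * r - r ^ 3| := by rw [abs_sub_comm]; exact le_abs_self _
      _ = ‖(((N * r - r ^ 3 : ℝ)) : ℂ)‖ := by rw [Complex.norm_real, Real.norm_eq_abs]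
      _ = ‖(p:ℂ) ^ n * (A.card : ℂ) - (A.card : ℂ) ^ 3‖ := by rw [hcast]
      _ ≤ δ * (N * r) := hErest
  have hδNr : δ * (N * r) = r ^ 3 / 2 := by
    rw [hδ]
    field_simp
  rw [hδNr] at h7
  nlinarith [mul_lt_mul_of_pos_right h2 hrpos]

lemma exists_fiber {n : ℕ} {ψ : AddChar (ZMod p) ℂ} (hψ : ψ.IsPrimitive)
    (A : Finset (Fin n → ZMod p)) (γ : Fin n → ZMod p) {δ : ℝ} (hδ0 : 0 < δ)
    (hδ : δ ≤ ‖fc ψ A γ‖) :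
    ∃ j : ZMod p, (A.card : ℝ) / p + δ / (2 * p) ≤
      ((A.filter fun x => dotp γ x = j).card : ℝ) := by
  classical
  have hppos : (0:ℝ) < p := by exact_mod_cast hpp.out.pos
  set a : ZMod p → ℝ := fun j => ((A.filter fun x => dotp γ x = j).card : ℝ) with ha
  set r : ℝ := (A.card : ℝ) with hr
  have hsum : ∑ j : ZMod p, a j = r := by
    rw [hr, ha]
    push_cast
    norm_cast
    exact (Finset.card_eq_sum_card_fiberwise (fun x _ => Finset.mem_univ (dotp γ x))).symm
  have hfc : fc ψ A γ = ∑ j : ZMod p, ((a j : ℝ) : ℂ) * ψ j := by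
    rw [fc, ← Finset.sum_fiberwise_of_maps_to
      (fun x _ => Finset.mem_univ (dotp γ x)) (fun x => ψ (dotp γ x))]
    refine Finset.sum_congr rfl fun j _ => ?_
    have hcg : ∀ x ∈ A.filter (fun x => dotp γ x = j), ψ (dotp γ x) = ψ j := by
      intro x hx; rw [(Finset.mem_filter.mp hx).2]
    rw [Finset.sum_congr rfl hcg, Finset.sum_const, nsmul_eq_mul]
    norm_cast
  have habs : ∀ j : ZMod p, ‖ψ j‖ = 1 := abs_psi ψ
  have hzero : ∑ j : ZMod p, ψ j = 0 := by
    have h1 : ∑ x : ZMod p, ψ (x * 1) = 0 := by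
      rw [AddChar.sum_mulShift _ hψ, if_neg (one_ne_zero : (1 : ZMod p) ≠ 0)]
      norm_num
    simpa using h1
  set d : ZMod p → ℝ := fun j => a j - r / p with hd
  have hdsum : ∑ j : ZMod p, d j = 0 := by
    simp only [hd]
    rw [Finset.sum_sub_distrib, hsum, Finset.sum_const, Finset.card_univ, ZMod.card,
      nsmul_eq_mul, mul_div_cancel₀ _ (ne_of_gt hppos), sub_self]
  have hfc2 : fc ψ A γ = ∑ j : ZMod p, ((d j : ℝ) : ℂ) * ψ j := by
    rw [hfc]
    have hz2 : ∑ j : ZMod p, ((r / p : ℝ) : ℂ) * ψ j = 0 := by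
      rw [← Finset.mul_sum, hzero, mul_zero]
    rw [← sub_zero (∑ j : ZMod p, ((a j : ℝ) : ℂ) * ψ j), ← hz2, ← Finset.sum_sub_distrib]
    refine Finset.sum_congr rfl fun j _ => ?_
    rw [← sub_mul]
    norm_cast
  have habsineq : δ ≤ ∑ j : ZMod p, |d j| := by
    calc δ ≤ ‖fc ψ A γ‖ := hδ
      _ ≤ ∑ j : ZMod p, ‖((d j : ℝ) : ℂ) * ψ j‖ := by
        rw [hfc2]; exact norm_sum_le _ _
      _ = ∑ j : ZMod p, |d j| := by
        refine Finset.sum_congr rfl fun j _ => ?_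
        rw [norm_mul, habs, mul_one, Complex.norm_real, Real.norm_eq_abs]
  have hex : ∃ j : ZMod p, δ / p ≤ |d j| + d j := by
    by_contra hc
    push_neg at hc
    have hlt : ∑ j : ZMod p, (|d j| + d j) < ∑ _j : ZMod p, δ / p :=
      Finset.sum_lt_sum_of_nonempty Finset.univ_nonempty fun j _ => hc j
    rw [Finset.sum_const, Finset.card_univ, ZMod.card, nsmul_eq_mul,
      mul_div_cancel₀ _ (ne_of_gt hppos)] at hlt
    have hge : δ ≤ ∑ j : ZMod p, (|d j| + d j) := by
      rw [Finset.sum_add_distrib, hdsum, add_zero]; exact habsineq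
    linarith
  obtain ⟨j, hj⟩ := hex
  refine ⟨j, ?_⟩
  have hdj : δ / (2 * p) ≤ d j := by
    have hhalf : δ / (2 * p) = (δ / p) / 2 := by ring
    rcases abs_cases (d j) with ⟨h1, h2⟩ | ⟨h1, h2⟩
    · rw [h1] at hj; linarith
    · rw [h1] at hj
      have : 0 < δ / p := div_pos hδ0 hppos
      linarith
  have hdef : d j = a j - r / p := rfl
  show r / p + δ / (2 * p) ≤ a j
  linarith

lemma transport {m : ℕ} {γ : Fin (m+1) → ZMod p} (hγ : γ ≠ 0) (j : ZMod p)
    {A : Finset (Fin (m+1) → ZMod p)} (hA : Free A) :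
    ∃ B : Finset (Fin m → ZMod p), Free B ∧
      B.card = (A.filter fun x => dotp γ x = j).card := by
  classical
  obtain ⟨i0, hi0⟩ : ∃ i, γ i ≠ 0 := by
    by_contra hc; push_neg at hc; exact hγ (funext hc)
  set b : ZMod p := γ i0 with hb
  set S : (Fin m → ZMod p) → ZMod p := fun u => ∑ k, γ (i0.succAbove k) * u k with hS
  have hSadd : ∀ u v, S (u + v) = S u + S v := by
    intro u v
    simp only [hS, Pi.add_apply, mul_add, Finset.sum_add_distrib]
  set φ : (Fin m → ZMod p) → (Fin (m+1) → ZMod p) :=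
    fun u => Fin.insertNth i0 ((j - S u) * b⁻¹) u with hφ
  have hφ_succ : ∀ u k, φ u (i0.succAbove k) = u k := by
    intro u k; simp [hφ]
  have hφ_same : ∀ u, φ u i0 = (j - S u) * b⁻¹ := by
    intro u; simp [hφ]
  have hdot : ∀ v : Fin (m+1) → ZMod p, dotp γ v = b * v i0 + S (v ∘ i0.succAbove) := by
    intro v
    rw [dotp, Fin.sum_univ_succAbove (fun i => γ i * v i) i0]
    rfl
  have hφdot : ∀ u, dotp γ (φ u) = j := by
    intro u
    rw [hdot, hφ_same]
    have hres : (φ u ∘ i0.succAbove) = u := funext fun k => hφ_succ u k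
    rw [hres]
    field_simp
    ring
  have hφfiber : ∀ v, dotp γ v = j → φ (v ∘ i0.succAbove) = v := by
    intro v hv
    have hSv : S (v ∘ i0.succAbove) = j - b * v i0 := by
      rw [← hv, hdot]; ring
    funext i
    refine Fin.succAboveCases (α := fun i => φ (v ∘ i0.succAbove) i = v i) i0 ?_ ?_ i
    · show φ (v ∘ i0.succAbove) i0 = v i0
      rw [hφ_same, hSv]
      field_simp
      ring
    · intro k
      show φ (v ∘ i0.succAbove) (i0.succAbove k) = v (i0.succAbove k)
      rw [hφ_succ]
      rfl
  set B : Finset (Fin m → ZMod p) :=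
    (A.filter fun v => dotp γ v = j).image (fun v => v ∘ i0.succAbove) with hB
  have hmem : ∀ u ∈ B, φ u ∈ A := by
    intro u hu
    rw [hB, Finset.mem_image] at hu
    obtain ⟨v, hv, hvu⟩ := hu
    rw [Finset.mem_filter] at hv
    have hvu2 : φ u = v := by rw [← hvu]; exact hφfiber v hv.2
    rw [hvu2]
    exact hv.1
  refine ⟨B, ?_, ?_⟩
  · intro u d hd h1 h2 h3
    have hu := hmem u h1
    have hud := hmem _ h2
    have hu2d := hmem _ h3
    set D : Fin (m+1) → ZMod p := φ (u + d) - φ u with hD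
    have hDres : ∀ k, D (i0.succAbove k) = d k := by
      intro k
      simp only [hD, Pi.sub_apply, hφ_succ, Pi.add_apply]
      ring
    have hD0 : D ≠ 0 := by
      intro h
      apply hd
      funext k
      have h5 := congrFun h (i0.succAbove k)
      rw [hDres] at h5
      exact h5
    have hlin : ∀ x y z w : Fin m → ZMod p, x + y = z + w → φ x + φ y = φ z + φ w := by
      intro x y z w hxyzw
      funext i
      refine Fin.succAboveCases (α := fun i => (φ x + φ y) i = (φ z + φ w) i) i0 ?_ ?_ i
      · show (φ x + φ y) i0 = (φ z + φ w) i0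
        simp only [Pi.add_apply, hφ_same]
        have hs : S x + S y = S z + S w := by
          rw [← hSadd, ← hSadd, hxyzw]
        linear_combination (-b⁻¹) * hs
      · intro k
        show (φ x + φ y) (i0.succAbove k) = (φ z + φ w) (i0.succAbove k)
        simp only [Pi.add_apply, hφ_succ]
        have h6 := congrFun hxyzw k
        simpa using h6
    have key2 : φ (u + d) = φ u + D := by rw [hD]; abel
    have key3 : φ (u + 2 • d) = φ u + 2 • D := by
      have h4 : φ (u + d) + φ (u + d) = φ u + φ (u + 2 • d) :=
        hlin _ _ _ _ (by rw [two_smul]; abel)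
      have h5 : φ u + φ (u + 2 • d) = φ u + (φ u + 2 • D) := by
        rw [← h4, hD]; abel
      exact add_left_cancel h5
    exact hA (φ u) D hD0 hu (by rw [← key2]; exact hud) (by rw [← key3]; exact hu2d)
  · rw [hB]
    apply Finset.card_image_of_injOn
    intro v hv w hw hvw
    rw [Finset.mem_coe, Finset.mem_filter] at hv hw
    have h7 : φ (v ∘ i0.succAbove) = φ (w ∘ i0.succAbove) := congrArg φ hvw
    rw [hφfiber v hv.2, hφfiber w hw.2] at h7
    exact h7

lemma sq_lt_aux : ∀ k : ℕ, k ^ 2 < 32 * 3 ^ k := by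
  intro k
  induction k with
  | zero => norm_num
  | succ n ih =>
    have h1 : n < 3 ^ n := Nat.lt_pow_self (by norm_num)
    have h2 : 1 ≤ 3 ^ n := Nat.one_le_pow _ _ (by norm_num)
    have h3 : 3 ^ (n + 1) = 3 ^ n * 3 := pow_succ 3 n
    nlinarith [ih, h1, h2, h3]

lemma main_bound (hodd : Odd p) :
    ∀ n : ℕ, 1 ≤ n → ∀ A : Finset (Fin n → ZMod p), Free A →
      (A.card : ℝ) ≤ 8 * (p : ℝ) ^ n / n := by
  have hppos : (0:ℝ) < p := by exact_mod_cast hpp.out.pos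
  have hp3 : 3 ≤ p := by
    have h2 : p % 2 = 1 := Nat.odd_iff.mp hodd
    have := hpp.out.two_le
    omega
  intro n
  induction n with
  | zero => intro h; exact absurd h (by norm_num)
  | succ m ih =>
    intro _ A hA
    by_cases hm : m = 0
    · subst hm
      have hcard : A.card ≤ p := by
        have h4 := Finset.card_le_univ A
        have hcu : Fintype.card (Fin 1 → ZMod p) = p := by
          simp [ZMod.card]
        exact le_trans h4 (le_of_eq hcu)
      have h5 : (A.card : ℝ) ≤ p := by exact_mod_cast hcard
      rw [pow_one]
      push_cast
      norm_num
      linarith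
    · have hm1 : 1 ≤ m := Nat.one_le_iff_ne_zero.mpr hm
      by_contra hcon
      push_neg at hcon
      push_cast at hcon
      set N : ℝ := (p:ℝ) ^ (m+1) with hN
      set r : ℝ := (A.card : ℝ) with hr
      have hNpos : 0 < N := pow_pos hppos _
      have hmR : (1:ℝ) ≤ (m:ℝ) := by exact_mod_cast hm1
      have hn1 : (0:ℝ) < (m:ℝ) + 1 := by linarith
      have hrlb : 8 * N / ((m:ℝ) + 1) < r := hcon
      have hrpos : 0 < r := lt_trans (by positivity) hrlb
      have hkey : 2 * N < r ^ 2 := by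
        have hsq := sq_lt_aux (m+1)
        have hsqR : ((m:ℝ) + 1) ^ 2 < 32 * (3:ℝ) ^ (m+1) := by exact_mod_cast hsq
        have h3p : (3:ℝ) ^ (m+1) ≤ (p:ℝ) ^ (m+1) :=
          pow_le_pow_left₀ (by norm_num) (by exact_mod_cast hp3) _
        have h32 : ((m:ℝ) + 1) ^ 2 < 32 * N := lt_of_lt_of_le hsqR (by nlinarith)
        have h8 : (0:ℝ) ≤ 8 * N / ((m:ℝ) + 1) := by positivity
        have hr2 : (8 * N / ((m:ℝ) + 1)) ^ 2 < r ^ 2 := by nlinarith [hrlb, h8]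
        have hlow : 2 * N < (8 * N / ((m:ℝ) + 1)) ^ 2 := by
          rw [div_pow, lt_div_iff₀ (by positivity)]
          nlinarith [h32, hNpos]
        linarith
      -- the character
      have hprim : IsPrimitiveRoot (Complex.exp (2 * Real.pi * Complex.I / p)) p :=
        Complex.isPrimitiveRoot_exp p (NeZero.ne p)
      set ψ : AddChar (ZMod p) ℂ := AddChar.zmodChar p hprim.pow_eq_one with hψdef
      have hψ : ψ.IsPrimitive := AddChar.zmodChar_primitive_of_primitive_root p hprim
      have hp2 : (2 : ZMod p) ≠ 0 := by
        intro h
        have h2 : ((2:ℕ) : ZMod p) = 0 := by exact_mod_cast h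
        rw [ZMod.natCast_eq_zero_iff] at h2
        have := Nat.le_of_dvd (by norm_num) h2
        omega
      obtain ⟨γ, hγ0, hγ⟩ := exists_large hψ hp2 hA hkey
      have hδpos : 0 < r ^ 2 / (2 * N) := by positivity
      obtain ⟨j, hj⟩ := exists_fiber hψ A γ hδpos hγ
      obtain ⟨B, hBfree, hBcard⟩ := transport hγ0 j hA
      have hIH : (B.card : ℝ) ≤ 8 * (p:ℝ) ^ m / m := ih hm1 B hBfree
      have hBc : (B.card : ℝ) = ((A.filter fun x => dotp γ x = j).card : ℝ) := by
        exact_mod_cast hBcard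
      set q : ℝ := (p:ℝ) ^ m with hq
      have hqpos : 0 < q := pow_pos hppos m
      have hNq : N = p * q := by rw [hN, hq, pow_succ]; ring
      have h9 : r / p + r ^ 2 / (2 * N) / (2 * p) ≤ 8 * q / (m:ℝ) := by
        calc r / p + r ^ 2 / (2 * N) / (2 * p)
            ≤ ((A.filter fun x => dotp γ x = j).card : ℝ) := hj
          _ = (B.card : ℝ) := hBc.symm
          _ ≤ 8 * q / (m:ℝ) := hIH
      have hmpos : (0:ℝ) < (m:ℝ) := by linarith
      have h11 : (r / p + r ^ 2 / (2 * N) / (2 * p)) * (4 * N * p) = 4 * N * r + r ^ 2 := by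
        field_simp
        ring
      have h13 : 4 * N * r + r ^ 2 ≤ 32 * N ^ 2 / (m:ℝ) := by
        rw [← h11]
        have h12 : (8 * q / (m:ℝ)) * (4 * N * p) = 32 * N ^ 2 / (m:ℝ) := by
          rw [hNq]
          field_simp
          ring
        rw [← h12]
        exact mul_le_mul_of_nonneg_right h9 (by positivity)
      have h14 : (4 * N * r + r ^ 2) * (m:ℝ) ≤ 32 * N ^ 2 := (le_div_iff₀ hmpos).mp h13
      have hA1 : 8 * N < r * ((m:ℝ) + 1) := (div_lt_iff₀ hn1).mp hrlb
      clear_value ψ N r q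
      clear hγ hj h9 h11 h13 hBc hIH hδpos hkey hrlb hcon hγ0 hBfree hBcard hp2 hψ hψdef hprim hA ih
      clear hr hN hq hNq hqpos
      clear A B γ j ψ
      have s1 : (m:ℝ) * r ^ 2 < 4 * N * r := by
        nlinarith [h14, mul_lt_mul_of_pos_left hA1 (show (0:ℝ) < 4 * N by positivity)]
      have s1' : ((m:ℝ) * r) * r < (4 * N) * r := by nlinarith [s1]
      have s2 : (m:ℝ) * r < 4 * N := lt_of_mul_lt_mul_right s1' (le_of_lt hrpos)
      have s3 : r ≤ (m:ℝ) * r := by nlinarith [hmR, hrpos]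
      have s4 : r * ((m:ℝ) + 1) = (m:ℝ) * r + r := by ring
      linarith

end Char

end Meshulam

/-- Meshulam's theorem: there is a constant `c_p > 0` such that every
`S ⊆ 𝔽_pⁿ` with `|S| ≥ c_p·pⁿ/n` contains a nontrivial three-term arithmetic
progression. -/
theorem stmt7 (p : ℕ) (hp : p.Prime) (hodd : Odd p) [NeZero p] :
    ∃ c : ℝ, 0 < c ∧
      ∀ n : ℕ, 1 ≤ n → ∀ S : Finset (Fin n → ZMod p),
        c * (p : ℝ) ^ n / n ≤ (S.card : ℝ) →
        ∃ m d : Fin n → ZMod p, d ≠ 0 ∧ m ∈ S ∧ m + d ∈ S ∧ m + 2 • d ∈ S := by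
  refine ⟨9, by norm_num, ?_⟩
  intro n hn S hS
  by_contra hcon
  push_neg at hcon
  haveI : Fact p.Prime := ⟨hp⟩
  have hfree : Meshulam.Free S := fun m d hd h1 h2 h3 => hcon m d hd h1 h2 h3
  have hb := Meshulam.main_bound hodd n hn S hfree
  have hppos : (0:ℝ) < p := by exact_mod_cast hp.pos
  have hnpos : (0:ℝ) < n := by exact_mod_cast hn
  have hpn : (0:ℝ) < (p:ℝ) ^ n := pow_pos hppos n
  have h1 : (9:ℝ) * (p:ℝ) ^ n / n ≤ 8 * (p:ℝ) ^ n / n := le_trans hS hb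
  rw [div_le_div_iff₀ hnpos hnpos] at h1
  nlinarith [hpn, hnpos]
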